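/- (Theorem 1, lower bound.) Let S ≥ 1, let B : [0,∞) → M_S(ℝ) and f : [0,∞) → ℝ^S be continuous, and let z*, z** : [0,∞) → ℝ^S be differentiable with (z*)'(t) = B(t)z*(t) + f(t) and (z**)'(t) = B(t)z**(t) + f(t) for all t ≥ 0. Let D be an invertible S×S real matrix with nonnegative entries such that D B(t) D⁻¹ is essentially nonnegative for every t ≥ 0, and set h_*(t) = min_{1≤j≤S} ∑_{i=1}^S (D B(t) D⁻¹)_{ij}. If D(z*(0) − z**(0)) ≥ 0 componentwise, then ‖D(z*(t) − z**(t))‖₁ ≥ exp(∫₀ᵗ h_*(τ) dτ) · ‖D(z*(0) − z**(0))‖₁ for all t ≥ 0. -/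

import Mathlib

open Set Topology Filter

lemma aux_deriv_nonpos_right {g : ℝ → ℝ} {s d : ℝ} (hs : 0 < s)
    (hg : HasDerivWithinAt g d (Icc 0 s) s) (hmin : ∀ t ∈ Ico 0 s, g s ≤ g t) : d ≤ 0 := by
  rw [hasDerivWithinAt_iff_tendsto_slope] at hg
  have hset : Icc (0:ℝ) s \ {s} = Ico 0 s := by rw [Icc_sdiff_right]
  rw [hset] at hg
  have hne : (𝓝[Ico (0:ℝ) s] s).NeBot := by
    rw [← mem_closure_iff_nhdsWithin_neBot, closure_Ico hs.ne]
    exact ⟨hs.le, le_rfl⟩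
  refine le_of_tendsto hg ?_
  filter_upwards [self_mem_nhdsWithin] with t ht
  have h1 : 0 ≤ g t - g s := sub_nonneg.2 (hmin t ht)
  have h2 : t - s < 0 := sub_neg.2 ht.2
  rw [slope_def_field]
  exact div_nonpos_iff.2 (Or.inl ⟨h1, h2.le⟩)

lemma aux_nonneg_invariant {S : ℕ} {A : ℝ → Matrix (Fin S) (Fin S) ℝ} {y : ℝ → Fin S → ℝ}
    (hAc : ∀ i j, ContinuousOn (fun t => A t i j) (Ici (0:ℝ)))
    (hy : ∀ t ∈ Ici (0:ℝ), ∀ i,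
      HasDerivWithinAt (fun s => y s i) ((A t).mulVec (y t) i) (Ici 0) t)
    (hq : ∀ t ∈ Ici (0:ℝ), ∀ i j, i ≠ j → 0 ≤ A t i j)
    (h0 : ∀ i, 0 ≤ y 0 i) : ∀ T ∈ Ici (0:ℝ), ∀ i, 0 ≤ y T i := by
  intro T hT i0
  -- bound on entries of A on [0, T]
  obtain ⟨C, hC⟩ : ∃ C, ∀ t ∈ Icc (0:ℝ) T, ‖∑ i, ∑ j, |A t i j|‖ ≤ C := by
    apply (isCompact_Icc).exists_bound_of_continuousOn
    apply continuousOn_finset_sum; intro i _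
    apply continuousOn_finset_sum; intro j _
    exact ((hAc i j).mono Icc_subset_Ici_self).abs
  have hCe : ∀ t ∈ Icc (0:ℝ) T, ∀ i j, |A t i j| ≤ C := by
    intro t ht i j
    calc |A t i j| ≤ ∑ j, |A t i j| :=
          Finset.single_le_sum (f := fun j => |A t i j|) (fun _ _ => abs_nonneg _)
            (Finset.mem_univ j)
      _ ≤ ∑ i, ∑ j, |A t i j| :=
          Finset.single_le_sum (f := fun i => ∑ j, |A t i j|)
            (fun _ _ => Finset.sum_nonneg fun _ _ => abs_nonneg _) (Finset.mem_univ i)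
      _ ≤ ‖∑ i, ∑ j, |A t i j|‖ := le_abs_self _
      _ ≤ C := hC t ht
  have hC0 : 0 ≤ C := le_trans (norm_nonneg _) (hC 0 ⟨le_rfl, hT⟩)
  set K : ℝ := S * C + 1 with hK
  -- continuity of y on [0,T]
  have ycont : ∀ i, ContinuousOn (fun t => y t i) (Icc 0 T) := by
    intro i t ht
    exact ((hy t ht.1 i).continuousWithinAt).mono Icc_subset_Ici_self
  -- main claim
  have claim : ∀ ε > (0:ℝ), ∀ t ∈ Icc (0:ℝ) T, ∀ i, 0 < y t i + ε * Real.exp (K * t) := by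
    intro ε hε
    by_contra hcon
    push_neg at hcon
    obtain ⟨t₀, ht₀, i₀, hi₀⟩ := hcon
    set u : ℝ → Fin S → ℝ := fun t i => y t i + ε * Real.exp (K * t) with hu
    set Z : Set ℝ := {t | t ∈ Icc (0:ℝ) T ∧ ∃ i, u t i ≤ 0} with hZ
    have hZne : Z.Nonempty := ⟨t₀, ht₀, i₀, hi₀⟩
    have hZbdd : BddBelow Z := ⟨0, fun x hx => hx.1.1⟩
    set s : ℝ := sInf Z with hsdef
    have hs0 : 0 ≤ s := le_csInf hZne fun x hx => hx.1.1
    have hsT : s ≤ T := le_trans (csInf_le hZbdd ⟨ht₀, i₀, hi₀⟩) ht₀.2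
    have hsIcc : s ∈ Icc (0:ℝ) T := ⟨hs0, hsT⟩
    have ucont : ∀ i, ContinuousOn (fun t => u t i) (Icc 0 T) := by
      intro i
      exact (ycont i).add (continuousOn_const.mul
        (Real.continuous_exp.comp (continuous_const.mul continuous_id)).continuousOn)
    -- s belongs to Z
    have hsZ : ∃ i, u s i ≤ 0 := by
      by_contra hc
      push_neg at hc
      have hev : ∀ᶠ t in 𝓝[Icc (0:ℝ) T] s, ∀ i, 0 < u t i := by
        rw [eventually_all]
        intro i
        exact (ucont i s hsIcc).eventually (eventually_gt_nhds (hc i))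
      rw [eventually_iff, Metric.mem_nhdsWithin_iff] at hev
      obtain ⟨δ, hδ, hball⟩ := hev
      obtain ⟨x, hxZ, hxlt⟩ := exists_lt_of_csInf_lt hZne (by linarith : sInf Z < s + δ)
      have hsx : s ≤ x := csInf_le hZbdd hxZ
      have hdist : x ∈ Metric.ball s δ := by
        rw [Metric.mem_ball, Real.dist_eq, abs_of_nonneg (by linarith)]
        linarith
      obtain ⟨i, hi⟩ := hxZ.2
      exact absurd (hball ⟨hdist, hxZ.1⟩ i) (not_lt.2 hi)
    -- s is positive
    have hspos : 0 < s := by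
      rcases hs0.lt_or_eq with h | h
      · exact h
      · exfalso
        obtain ⟨i, hi⟩ := hsZ
        rw [← h] at hi
        change y 0 i + ε * Real.exp (K * 0) ≤ 0 at hi
        have : (0:ℝ) < y 0 i + ε * Real.exp (K * 0) := by
          rw [mul_zero, Real.exp_zero, mul_one]
          have := h0 i
          linarith
        linarith
    -- positivity strictly before s
    have hpre : ∀ t ∈ Ico (0:ℝ) s, ∀ i, 0 < u t i := by
      intro t ht i
      by_contra hc
      push_neg at hc
      have : s ≤ t := csInf_le hZbdd ⟨⟨ht.1, le_trans ht.2.le hsT⟩, i, hc⟩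
      exact absurd ht.2 (not_lt.2 this)
    -- nonnegative at s (limit from the left)
    have hne : (𝓝[Ico (0:ℝ) s] s).NeBot := by
      rw [← mem_closure_iff_nhdsWithin_neBot, closure_Ico hspos.ne]
      exact ⟨hs0, le_rfl⟩
    have husnn : ∀ j, 0 ≤ u s j := by
      intro j
      have htend : Tendsto (fun t => u t j) (𝓝[Ico (0:ℝ) s] s) (𝓝 (u s j)) :=
        ((ucont j s hsIcc).mono fun t ht => ⟨ht.1, le_trans ht.2.le hsT⟩)
      exact ge_of_tendsto htend
        (eventually_of_mem self_mem_nhdsWithin fun t ht => (hpre t ht j).le)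
    obtain ⟨i, hui⟩ := hsZ
    have husi : u s i = 0 := le_antisymm hui (husnn i)
    -- derivative of u · i at s
    have hexp : HasDerivAt (fun t => ε * Real.exp (K * t)) (ε * (Real.exp (K * s) * K)) s := by
      have h1 : HasDerivAt (fun t : ℝ => K * t) K s := by
        simpa using (hasDerivAt_id s).const_mul K
      exact (h1.exp).const_mul ε
    have hud : HasDerivWithinAt (fun t => u t i)
        ((A s).mulVec (y s) i + ε * (Real.exp (K * s) * K)) (Ici 0) s :=
      (hy s hs0 i).add hexp.hasDerivWithinAt
    -- the derivative is positive
    set e : ℝ := Real.exp (K * s) with he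
    have hepos : 0 < e := Real.exp_pos _
    have hsum : 0 ≤ ∑ j, A s i j * u s j := by
      apply Finset.sum_nonneg
      intro j _
      rcases eq_or_ne j i with rfl | hji
      · rw [husi, mul_zero]
      · exact mul_nonneg (hq s hs0 i j (Ne.symm hji)) (husnn j)
    have hAsum : ∑ j, A s i j ≤ S * C := by
      calc ∑ j, A s i j ≤ ∑ _j : Fin S, C :=
            Finset.sum_le_sum fun j _ => le_trans (le_abs_self _) (hCe s hsIcc i j)
        _ = S * C := by simp [mul_comm]
    have hmv : (A s).mulVec (y s) i = ∑ j, A s i j * u s j - (∑ j, A s i j) * (ε * e) := by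
      rw [Finset.sum_mul]
      rw [Matrix.mulVec, dotProduct]
      rw [← Finset.sum_sub_distrib]
      congr 1; funext j
      have huj : u s j = y s j + ε * e := rfl
      rw [huj]; ring
    have hdpos : 0 < (A s).mulVec (y s) i + ε * (e * K) := by
      rw [hmv]
      have h1 : (∑ j, A s i j) * (ε * e) ≤ (S * C) * (ε * e) :=
        mul_le_mul_of_nonneg_right hAsum (by positivity)
      have h2 : ε * (e * K) = (S * C) * (ε * e) + ε * e := by rw [hK]; ring
      nlinarith
    -- contradiction with the right-endpoint minimum
    have hmin : ∀ t ∈ Ico (0:ℝ) s, u s i ≤ u t i := by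
      intro t ht
      rw [husi]
      exact (hpre t ht i).le
    have := aux_deriv_nonpos_right hspos
      (hud.mono (Icc_subset_Ici_self)) hmin
    linarith
  -- conclude
  by_contra hneg
  push_neg at hneg
  have he : (0:ℝ) < Real.exp (K * T) := Real.exp_pos _
  have hε : 0 < -y T i0 / Real.exp (K * T) := div_pos (by linarith) he
  have := claim _ hε T ⟨hT, le_rfl⟩ i0
  rw [div_mul_cancel₀ _ he.ne'] at this
  linarith


/-- Theorem 1 (lower bound): if `z*` and `z**` both solve
`z' = B(t)z + f(t)` on `[0,∞)`, `D` is invertible with nonnegative entries,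
`D B(t) D⁻¹` is essentially nonnegative, and `D(z*(0) − z**(0)) ≥ 0`
componentwise, then
`‖D(z*(t) − z**(t))‖₁ ≥ exp(∫₀ᵗ h₋(τ) dτ) ‖D(z*(0) − z**(0))‖₁`,
where `h₋(t)` is the smallest column sum of `D B(t) D⁻¹`. -/
theorem theorem_one_lower_bound
    (S : ℕ) (hS : 1 ≤ S)
    (B : ℝ → Matrix (Fin S) (Fin S) ℝ) (f : ℝ → Fin S → ℝ)
    (hBcont : ∀ i j, ContinuousOn (fun t => B t i j) (Ici (0 : ℝ)))
    (hfcont : ∀ i, ContinuousOn (fun t => f t i) (Ici (0 : ℝ)))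
    (z₁ z₂ : ℝ → Fin S → ℝ)
    (hz₁ : ∀ t ∈ Ici (0 : ℝ), ∀ i,
      HasDerivWithinAt (fun s => z₁ s i) ((B t).mulVec (z₁ t) i + f t i) (Ici 0) t)
    (hz₂ : ∀ t ∈ Ici (0 : ℝ), ∀ i,
      HasDerivWithinAt (fun s => z₂ s i) ((B t).mulVec (z₂ t) i + f t i) (Ici 0) t)
    (D : Matrix (Fin S) (Fin S) ℝ)
    (hDinv : IsUnit D.det)
    (hDnonneg : ∀ i j, 0 ≤ D i j)
    (hHess : ∀ t ∈ Ici (0 : ℝ), ∀ i j, i ≠ j → 0 ≤ (D * B t * D⁻¹) i j)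
    (hlow : ℝ → ℝ)
    (hhlow : ∀ t, hlow t = ⨅ j, ∑ i, (D * B t * D⁻¹) i j)
    (hinit : ∀ i, 0 ≤ D.mulVec (z₁ 0 - z₂ 0) i) :
    ∀ t ∈ Ici (0 : ℝ),
      Real.exp (∫ τ in (0 : ℝ)..t, hlow τ) * ∑ i, |D.mulVec (z₁ 0 - z₂ 0) i| ≤
        ∑ i, |D.mulVec (z₁ t - z₂ t) i| := by
  haveI : Nonempty (Fin S) := Fin.pos_iff_nonempty.mp (by omega)
  set A : ℝ → Matrix (Fin S) (Fin S) ℝ := fun t => D * B t * D⁻¹ with hA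
  set y : ℝ → Fin S → ℝ := fun t => D.mulVec (z₁ t - z₂ t) with hy
  -- continuity of entries of A
  have hAc : ∀ i j, ContinuousOn (fun t => A t i j) (Ici (0:ℝ)) := by
    intro i j
    have : (fun t => A t i j) = fun t => ∑ k, (∑ l, D i l * B t l k) * D⁻¹ k j := by
      funext t
      simp [hA, Matrix.mul_apply]
    rw [this]
    apply continuousOn_finset_sum; intro k _
    apply ContinuousOn.mul _ continuousOn_const
    apply continuousOn_finset_sum; intro l _
    exact continuousOn_const.mul (hBcont l k)
  -- derivative of y
  have hy' : ∀ t ∈ Ici (0:ℝ), ∀ i,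
      HasDerivWithinAt (fun s => y s i) ((A t).mulVec (y t) i) (Ici 0) t := by
    intro t ht i
    have hv : ∀ j, HasDerivWithinAt (fun s => z₁ s j - z₂ s j)
        ((B t).mulVec (z₁ t - z₂ t) j) (Ici 0) t := by
      intro j
      have h := (hz₁ t ht j).sub (hz₂ t ht j)
      have hval : (B t).mulVec (z₁ t) j + f t j - ((B t).mulVec (z₂ t) j + f t j)
          = (B t).mulVec (z₁ t - z₂ t) j := by
        rw [Matrix.mulVec_sub]
        simp
      rwa [hval] at h
    have hsum : HasDerivWithinAt (fun s => ∑ j, D i j * (z₁ s j - z₂ s j))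
        (∑ j, D i j * (B t).mulVec (z₁ t - z₂ t) j) (Ici 0) t :=
      HasDerivWithinAt.fun_sum fun j _ => (hv j).const_mul (D i j)
    have hfun : (fun s => y s i) = fun s => ∑ j, D i j * (z₁ s j - z₂ s j) := by
      funext s
      simp [hy, Matrix.mulVec, dotProduct]
    have hval2 : (A t).mulVec (y t) i = ∑ j, D i j * (B t).mulVec (z₁ t - z₂ t) j := by
      have h1 : (A t).mulVec (y t) = (D * B t).mulVec (z₁ t - z₂ t) := by
        rw [hA, hy, Matrix.mulVec_mulVec, Matrix.mul_assoc (D * B t),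
          Matrix.nonsing_inv_mul D hDinv, Matrix.mul_one]
      rw [h1, ← Matrix.mulVec_mulVec]
      simp [Matrix.mulVec, dotProduct]
    rw [hfun, hval2]
    exact hsum
  -- nonnegativity of y
  have hynn : ∀ t ∈ Ici (0:ℝ), ∀ i, 0 ≤ y t i :=
    aux_nonneg_invariant hAc hy' hHess hinit
  intro T hT
  -- continuous extension of hlow
  set g : ℝ → ℝ := fun s => ⨅ j, ∑ i, A (max s 0) i j with hg
  have hgc : Continuous g := by
    have hcol : ∀ j, Continuous fun s => ∑ i, A (max s 0) i j := by
      intro j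
      apply continuous_finset_sum; intro i _
      exact (hAc i j).comp_continuous (continuous_id.max continuous_const)
        fun x => mem_Ici.2 (le_max_right _ _)
    have : g = fun s => Finset.univ.inf' Finset.univ_nonempty
        (fun j => ∑ i, A (max s 0) i j) := by
      funext s
      rw [Finset.inf'_univ_eq_ciInf]
    rw [this]
    exact Continuous.finset_inf'_apply Finset.univ_nonempty fun j _ => hcol j
  have hgeq : ∀ τ ∈ Icc (0:ℝ) T, hlow τ = g τ := by
    intro τ hτ
    rw [hhlow, hg]
    simp [hA, max_eq_left hτ.1]
  -- the integral function
  set G : ℝ → ℝ := fun t => ∫ τ in (0:ℝ)..t, g τ with hG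
  have hGd : ∀ t, HasDerivAt G (g t) t := by
    intro t
    exact intervalIntegral.integral_hasDerivAt_right
      (hgc.intervalIntegrable 0 t)
      hgc.stronglyMeasurable.stronglyMeasurableAtFilter
      hgc.continuousAt
  set N : ℝ → ℝ := fun t => ∑ i, y t i with hN
  have hNd : ∀ t ∈ Ici (0:ℝ), HasDerivWithinAt N (∑ i, (A t).mulVec (y t) i) (Ici 0) t :=
    fun t ht => HasDerivWithinAt.fun_sum fun i _ => hy' t ht i
  have hNge : ∀ t ∈ Ici (0:ℝ), hlow t * N t ≤ ∑ i, (A t).mulVec (y t) i := by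
    intro t ht
    have h1 : ∑ i, (A t).mulVec (y t) i = ∑ j, (∑ i, A t i j) * y t j := by
      simp only [Matrix.mulVec, dotProduct, Finset.sum_mul]
      rw [Finset.sum_comm]
    rw [h1, hN, Finset.mul_sum]
    apply Finset.sum_le_sum
    intro j _
    apply mul_le_mul_of_nonneg_right _ (hynn t ht j)
    rw [hhlow]
    exact ciInf_le (Finite.bddBelow_range _) j
  -- monotone function
  set φ : ℝ → ℝ := fun t => N t * Real.exp (-G t) with hφ
  have hφd : ∀ t ∈ Ici (0:ℝ), HasDerivWithinAt φ
      ((∑ i, (A t).mulVec (y t) i - g t * N t) * Real.exp (-G t)) (Ici 0) t := by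
    intro t ht
    have hE : HasDerivAt (fun t => Real.exp (-G t)) (Real.exp (-G t) * (-g t)) t :=
      ((hGd t).neg).exp
    have : HasDerivWithinAt (fun t => N t * Real.exp (-G t)) _ (Ici 0) t :=
      (hNd t ht).mul hE.hasDerivWithinAt
    convert this using 1
    ring
  have hφnn : ∀ t ∈ Icc (0:ℝ) T,
      0 ≤ (∑ i, (A t).mulVec (y t) i - g t * N t) * Real.exp (-G t) := by
    intro t ht
    apply mul_nonneg _ (Real.exp_pos _).le
    rw [← hgeq t ht]
    linarith [hNge t ht.1]
  have hmono : MonotoneOn φ (Icc 0 T) := by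
    apply monotoneOn_of_deriv_nonneg (convex_Icc 0 T)
    · intro x hx
      exact ((hφd x hx.1).continuousWithinAt).mono Icc_subset_Ici_self
    · intro x hx
      rw [interior_Icc] at hx
      exact ((hφd x hx.1.le).hasDerivAt (Ici_mem_nhds hx.1)).differentiableAt.differentiableWithinAt
    · intro x hx
      rw [interior_Icc] at hx
      rw [((hφd x hx.1.le).hasDerivAt (Ici_mem_nhds hx.1)).deriv]
      exact hφnn x ⟨hx.1.le, hx.2.le⟩
  have hkey : φ 0 ≤ φ T := hmono ⟨le_rfl, hT⟩ ⟨hT, le_rfl⟩ hT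
  have hG0 : G 0 = 0 := intervalIntegral.integral_same
  have hφ0 : φ 0 = N 0 := by simp [hφ, hG0]
  -- conclude
  have hIeq : (∫ τ in (0:ℝ)..T, hlow τ) = G T := by
    rw [hG]
    apply intervalIntegral.integral_congr
    intro τ hτ
    rw [uIcc_of_le hT] at hτ
    exact hgeq τ hτ
  have hNT : Real.exp (G T) * N 0 ≤ N T := by
    have h2 : Real.exp (G T) * (N T * Real.exp (-G T)) = N T := by
      rw [Real.exp_neg]
      field_simp
    calc Real.exp (G T) * N 0 ≤ Real.exp (G T) * (N T * Real.exp (-G T)) := by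
          apply mul_le_mul_of_nonneg_left _ (Real.exp_pos _).le
          rw [← hφ0]; exact hkey
      _ = N T := h2
  have habs0 : ∑ i, |D.mulVec (z₁ 0 - z₂ 0) i| = N 0 := by
    apply Finset.sum_congr rfl
    intro i _
    exact abs_of_nonneg (hinit i)
  have habsT : ∑ i, |D.mulVec (z₁ T - z₂ T) i| = N T := by
    apply Finset.sum_congr rfl
    intro i _
    exact abs_of_nonneg (hynn T hT i)
  rw [habs0, habsT, hIeq]
  exact hNT
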